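/- Let α : Fin n → Fin k be a surjective randomness configuration, k ≥ 1, and suppose some fiber is a singleton: α⁻¹(c₀) = {i₀}. With X i = R (α i) for R distributed according to μ, for every t ≥ 1 (blackboard knowledge): μ({R : ∀ l ≠ i₀, K^X l t ≠ K^X i₀ t}) = (1 − 2^{−t})^{k−1}; hence μ({R : ∃ i, ∀ l ≠ i, K^X l t ≠ K^X i t}) ≥ 1 − (k−1)·2^{−t}, which tends to 1 as t → ∞. (This is the 'if' direction of the paper's blackboard theorem: if some source is connected to exactly one party, leader election is eventually solvable.) -/

import Mathlib

open MeasureTheory Filter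
open scoped ENNReal

/-- Blackboard knowledge values at time `t`: `init` at time `0`; at time `t+1` a knowledge
value is the previous knowledge, the fresh random bit, and the multiset of the other nodes'
previous knowledge values. (This is the time-indexed form of the inductive type `W` with
constructors `init : W` and `step : W → Bool → Multiset W → W`.) -/
def BBW : ℕ → Type
  | 0 => Unit
  | t + 1 => BBW t × Bool × Multiset (BBW t)

/-- The blackboard knowledge `K^x i t` of node `i` at time `t`, given the bit sequences `x`:
`K^x i 0 = init` and `K^x i (t+1) = step (K^x i t) (x i t) {K^x j t : j ≠ i}`. -/
def bbK {n : ℕ} (x : Fin n → ℕ → Bool) : Fin n → (t : ℕ) → BBW t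
  | _, 0 => ()
  | i, t + 1 => (bbK x i t, x i t, (Finset.univ.erase i).val.map (fun j => bbK x j t))

lemma bbK_succ {n : ℕ} (x : Fin n → ℕ → Bool) (i : Fin n) (t : ℕ) :
    bbK x i (t+1) = (bbK x i t, x i t, (Finset.univ.erase i).val.map (fun j => bbK x j t)) := rfl

/-- Two nodes have the same blackboard knowledge at time `t` iff they have received the same
bits in the first `t` rounds. -/
lemma bbK_eq_iff {n : ℕ} (x : Fin n → ℕ → Bool) (l i : Fin n) (t : ℕ) :
    bbK x l t = bbK x i t ↔ ∀ s < t, x l s = x i s := by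
  induction t with
  | zero =>
    constructor
    · intro _ s hs; exact absurd hs (Nat.not_lt_zero s)
    · intro _; rfl
  | succ t ih =>
    constructor
    · intro h s hs
      rw [bbK_succ, bbK_succ] at h
      change @Eq (BBW t × Bool × Multiset (BBW t)) _ _ at h
      rw [Prod.ext_iff, Prod.ext_iff] at h
      rcases Nat.lt_succ_iff_lt_or_eq.mp hs with h' | h'
      · exact ih.mp h.1 s h'
      · subst h'; exact h.2.1
    · intro h
      have hK : bbK x l t = bbK x i t := ih.mpr fun s hs => h s (hs.trans (Nat.lt_succ_self t))
      have hx : x l t = x i t := h t (Nat.lt_succ_self t)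
      have hm : (Finset.univ.erase l).val.map (fun j => bbK x j t)
          = (Finset.univ.erase i).val.map (fun j => bbK x j t) := by
        have h1 : ∀ a : Fin n, bbK x a t ::ₘ (Finset.univ.erase a).val.map (fun j => bbK x j t)
            = Finset.univ.val.map (fun j => bbK x j t) := by
          intro a
          rw [Finset.erase_val]
          have h2 : (a ::ₘ Finset.univ.val.erase a).map (fun j => bbK x j t)
              = Finset.univ.val.map (fun j => bbK x j t) := by
            rw [Multiset.cons_erase (Finset.mem_univ_val a)]
          rw [Multiset.map_cons] at h2
          exact h2
        have := (h1 l).trans (h1 i).symm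
        rw [hK] at this
        exact (Multiset.cons_inj_right _).mp this
      rw [bbK_succ, bbK_succ, hK, hx, hm]

/-- Counting the functions `Fin k → Fin t → Bool` whose value at `c₀` differs from all other
values. -/
lemma bb_count_lemma (k t : ℕ) (c₀ : Fin k) :
    (Finset.univ.filter (fun y : Fin k → Fin t → Bool => ∀ c, c ≠ c₀ → y c ≠ y c₀)).card
      = 2^t * (2^t - 1)^(k-1) := by
  classical
  have hV : Fintype.card (Fin t → Bool) = 2^t := by simp
  rw [Finset.card_eq_sum_card_fiberwise
    (f := fun y : Fin k → Fin t → Bool => y c₀) (t := Finset.univ)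
    (fun y _ => Finset.mem_univ _)]
  have hfib : ∀ z : Fin t → Bool,
      ((Finset.univ.filter (fun y : Fin k → Fin t → Bool => ∀ c, c ≠ c₀ → y c ≠ y c₀)).filter
        (fun y => y c₀ = z))
      = Fintype.piFinset (fun c => if c = c₀ then ({z} : Finset (Fin t → Bool)) else {z}ᶜ) := by
    intro z
    ext y
    simp only [Finset.mem_filter, Finset.mem_univ, true_and, Fintype.mem_piFinset]
    constructor
    · rintro ⟨hP, hz⟩ c
      by_cases hc : c = c₀
      · subst hc; simp [hz]
      · simp only [if_neg hc, Finset.mem_compl, Finset.mem_singleton]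
        rw [← hz]; exact hP c hc
    · intro hmem
      have hz : y c₀ = z := by simpa using hmem c₀
      refine ⟨fun c hc => ?_, hz⟩
      have := hmem c
      rw [if_neg hc] at this
      simp only [Finset.mem_compl, Finset.mem_singleton] at this
      rw [hz]; exact this
  have hcard : ∀ z : Fin t → Bool,
      (Fintype.piFinset (fun c => if c = c₀ then ({z} : Finset (Fin t → Bool)) else {z}ᶜ)).card
        = (2^t - 1)^(k-1) := by
    intro z
    rw [Fintype.card_piFinset]
    rw [← Finset.mul_prod_erase Finset.univ _ (Finset.mem_univ c₀)]
    rw [if_pos rfl, Finset.card_singleton, one_mul]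
    rw [Finset.prod_congr rfl (fun c hc => ?_), Finset.prod_const,
      Finset.card_erase_of_mem (Finset.mem_univ c₀), Finset.card_univ, Fintype.card_fin]
    rw [if_neg (Finset.ne_of_mem_erase hc), Finset.card_compl, Finset.card_singleton, hV]
  calc ∑ z : Fin t → Bool, _ = ∑ z : Fin t → Bool, (2^t - 1)^(k-1) := by
        refine Finset.sum_congr rfl fun z _ => ?_
        rw [hfib z, hcard z]
    _ = 2^t * (2^t - 1)^(k-1) := by rw [Finset.sum_const, Finset.card_univ, hV, smul_eq_mul]

lemma bb_arith_lemma (k t : ℕ) (hk : 1 ≤ k) :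
    ((2^t * (2^t - 1)^(k-1) : ℕ) : ℝ≥0∞) * (2 : ℝ≥0∞)⁻¹ ^ (k*t)
      = (1 - (2 : ℝ≥0∞)⁻¹ ^ t) ^ (k-1) := by
  have h2 : (2 : ℝ≥0∞) * 2⁻¹ = 1 := ENNReal.mul_inv_cancel two_ne_zero ENNReal.ofNat_ne_top
  have hx : (1 : ℝ≥0∞) - 2⁻¹ ^ t = ((2^t - 1 : ℕ) : ℝ≥0∞) * 2⁻¹ ^ t := by
    have h1 : ((2^t - 1 : ℕ) : ℝ≥0∞) * 2⁻¹ ^ t + 2⁻¹ ^ t = 1 := by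
      rw [← add_one_mul]
      have hc : ((2^t - 1 : ℕ) : ℝ≥0∞) + 1 = ((2:ℝ≥0∞))^t := by
        have : ((2^t - 1 : ℕ) : ℝ≥0∞) + ((1:ℕ):ℝ≥0∞) = (((2^t - 1) + 1 : ℕ) : ℝ≥0∞) := by
          rw [Nat.cast_add]
        rw [Nat.cast_one] at this
        rw [this, Nat.sub_add_cancel Nat.one_le_two_pow]
        push_cast; ring
      rw [hc, ← mul_pow, h2, one_pow]
    refine (ENNReal.eq_sub_of_add_eq ?_ h1).symm
    exact ENNReal.pow_ne_top (by simp)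
  rw [hx]
  have hcast : ((2^t * (2^t - 1)^(k-1) : ℕ) : ℝ≥0∞)
      = (2:ℝ≥0∞)^t * ((2^t - 1 : ℕ) : ℝ≥0∞)^(k-1) := by push_cast; ring
  rw [hcast, mul_pow]
  have hsplit : (2 : ℝ≥0∞)⁻¹ ^ (k*t) = (2⁻¹ ^ t)^(k-1) * 2⁻¹ ^ t := by
    rw [← pow_mul, ← pow_add]
    congr 1
    obtain ⟨m, rfl⟩ := Nat.exists_eq_succ_of_ne_zero (Nat.one_le_iff_ne_zero.mp hk)
    simp [Nat.succ_mul, Nat.mul_comm]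
  rw [hsplit]
  have h1t : (2:ℝ≥0∞)^t * 2⁻¹^t = 1 := by rw [← mul_pow, h2, one_pow]
  calc (2:ℝ≥0∞)^t * ((2^t - 1 : ℕ) : ℝ≥0∞)^(k-1) * ((2⁻¹ ^ t)^(k-1) * 2⁻¹ ^ t)
      = (((2^t - 1 : ℕ) : ℝ≥0∞)^(k-1) * (2⁻¹ ^ t)^(k-1)) * ((2:ℝ≥0∞)^t * 2⁻¹^t) := by ring
    _ = ((2^t - 1 : ℕ) : ℝ≥0∞)^(k-1) * (2⁻¹ ^ t)^(k-1) := by rw [h1t, mul_one]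

lemma bb_bernoulli_lemma (a : ℝ≥0∞) : ∀ m : ℕ, 1 - (m : ℝ≥0∞) * a ≤ (1 - a) ^ m := by
  intro m
  induction m with
  | zero => simp
  | succ m ih =>
    have h1 : (1:ℝ≥0∞) - ((m:ℝ≥0∞)+1) * a = (1 - (m:ℝ≥0∞)*a) - a := by
      rw [add_mul, one_mul, tsub_add_eq_tsub_tsub]
    have hle1 : (1 - a : ℝ≥0∞) ^ m ≤ 1 := pow_le_one' tsub_le_self m
    have h2 : (1 - (m:ℝ≥0∞)*a) - a ≤ (1-a)^m - (1-a)^m * a :=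
      tsub_le_tsub ih (mul_le_of_le_one_left zero_le hle1)
    have h3 : (1-a)^m * (1 - a) = (1-a)^m - (1-a)^m * a := by
      rw [ENNReal.mul_sub (fun _ _ =>
        ENNReal.pow_ne_top (ne_top_of_le_ne_top ENNReal.one_ne_top tsub_le_self)), mul_one]
    push_cast
    rw [h1]
    calc (1 - (m:ℝ≥0∞)*a) - a ≤ (1-a)^m * (1-a) := h3.symm ▸ h2
      _ = (1-a)^(m+1) := (pow_succ _ _).symm

lemma bb_tendsto_lower (c : ℕ) :
    Tendsto (fun t : ℕ => (1:ℝ≥0∞) - (c : ℝ≥0∞) * (2:ℝ≥0∞)⁻¹ ^ t) atTop (nhds 1) := by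
  have hpow : Tendsto (fun t : ℕ => ((2:ℝ≥0∞)⁻¹) ^ t) atTop (nhds 0) :=
    ENNReal.tendsto_pow_atTop_nhds_zero_of_lt_one (by
      rw [ENNReal.inv_lt_one]; exact ENNReal.one_lt_two)
  have hmul : Tendsto (fun t : ℕ => (c : ℝ≥0∞) * (2:ℝ≥0∞)⁻¹ ^ t) atTop (nhds 0) := by
    have := ENNReal.Tendsto.const_mul hpow (Or.inr (ENNReal.natCast_ne_top c))
    simpa using this
  have hsub : Tendsto (fun t : ℕ => (1:ℝ≥0∞) - (c : ℝ≥0∞) * (2:ℝ≥0∞)⁻¹ ^ t) atTop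
      (nhds (1 - 0)) :=
    (ENNReal.continuous_sub_left ENNReal.one_ne_top).continuousAt.tendsto.comp hmul
  simpa using hsub

/-- **Blackboard 'if' direction.** If the fiber of some source `c₀` is the singleton `{i₀}`,
then with `X i = R (α i)` and `μ` the product of fair-coin measures: for every `t ≥ 1` the
probability that `i₀`'s blackboard knowledge differs from all other nodes' equals
`(1 - 2^{-t})^(k-1)`, hence the probability of solving leader election at time `t` is at least
`1 - (k-1)·2^{-t}`, which tends to `1` as `t → ∞`. -/
theorem blackboard_singleton_source_solvable (n k : ℕ) (hn : 1 ≤ n) (hk : 1 ≤ k)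
    (α : Fin n → Fin k) (hα : Function.Surjective α)
    (c₀ : Fin k) (i₀ : Fin n) (hfib : {i : Fin n | α i = c₀} = {i₀})
    (μ : Measure (Fin k → ℕ → Bool)) [IsProbabilityMeasure μ]
    (hμ : ∀ (t : ℕ) (y : Fin k → Fin t → Bool),
      μ {R | ∀ (c : Fin k) (s : Fin t), R c (s : ℕ) = y c s} = (2 : ℝ≥0∞)⁻¹ ^ (k * t)) :
    (∀ t : ℕ, 1 ≤ t →
      μ {R | ∀ l : Fin n, l ≠ i₀ →
          bbK (fun i' => R (α i')) l t ≠ bbK (fun i' => R (α i')) i₀ t}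
        = (1 - (2 : ℝ≥0∞)⁻¹ ^ t) ^ (k - 1)) ∧
    (∀ t : ℕ, 1 ≤ t →
      μ {R | ∃ i : Fin n, ∀ l : Fin n, l ≠ i →
          bbK (fun i' => R (α i')) l t ≠ bbK (fun i' => R (α i')) i t}
        ≥ 1 - ((k - 1 : ℕ) : ℝ≥0∞) * (2 : ℝ≥0∞)⁻¹ ^ t) ∧
    Tendsto
      (fun t : ℕ => μ {R | ∃ i : Fin n, ∀ l : Fin n, l ≠ i →
        bbK (fun i' => R (α i')) l t ≠ bbK (fun i' => R (α i')) i t})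
      atTop (nhds 1) := by
  classical
  have hαi₀ : α i₀ = c₀ := by
    have h : i₀ ∈ ({i₀} : Set (Fin n)) := rfl
    rw [← hfib] at h
    exact h
  have hne : ∀ l : Fin n, l ≠ i₀ → α l ≠ c₀ := by
    intro l hl hc
    have h : l ∈ ({i₀} : Set (Fin n)) := by rw [← hfib]; exact hc
    exact hl h
  -- the key identity, valid for every `t`
  have key : ∀ t : ℕ,
      μ {R | ∀ l : Fin n, l ≠ i₀ →
          bbK (fun i' => R (α i')) l t ≠ bbK (fun i' => R (α i')) i₀ t}
        = (1 - (2 : ℝ≥0∞)⁻¹ ^ t) ^ (k - 1) := by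
    intro t
    set T : Finset (Fin k → Fin t → Bool) :=
      Finset.univ.filter (fun y : Fin k → Fin t → Bool => ∀ c, c ≠ c₀ → y c ≠ y c₀) with hT
    set C : (Fin k → Fin t → Bool) → Set (Fin k → ℕ → Bool) :=
      fun y => {R | ∀ (c : Fin k) (s : Fin t), R c (s : ℕ) = y c s} with hC
    have hset : {R : Fin k → ℕ → Bool | ∀ l : Fin n, l ≠ i₀ →
        bbK (fun i' => R (α i')) l t ≠ bbK (fun i' => R (α i')) i₀ t}
        = ⋃ y ∈ T, C y := by
      ext R
      simp only [Set.mem_setOf_eq, Set.mem_iUnion, exists_prop, hT, hC,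
        Finset.mem_filter, Finset.mem_univ, true_and]
      constructor
      · intro h
        refine ⟨fun c s => R c (s : ℕ), fun c hc hyc => ?_, fun c s => rfl⟩
        obtain ⟨l, rfl⟩ := hα c
        have hl : l ≠ i₀ := fun e => hc (by rw [e, hαi₀])
        have hbb := h l hl
        rw [Ne, bbK_eq_iff] at hbb
        push_neg at hbb
        obtain ⟨s, hs, hs'⟩ := hbb
        apply hs'
        have := congrFun hyc ⟨s, hs⟩
        simpa [hαi₀] using this
      · rintro ⟨y, hy, hR⟩ l hl
        rw [Ne, bbK_eq_iff]
        intro hall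
        apply hy (α l) (hne l hl)
        funext s
        rw [← hR (α l) s, ← hR c₀ s, ← hαi₀]
        exact hall (s : ℕ) s.isLt
    have hmeas : ∀ y, MeasurableSet (C y) := by
      intro y
      have hCy : C y = ⋂ (c : Fin k), ⋂ (s : Fin t),
          {R : Fin k → ℕ → Bool | R c (s : ℕ) = y c s} := by
        ext R; simp [hC, Set.mem_iInter]
      rw [hCy]
      refine MeasurableSet.iInter fun c => MeasurableSet.iInter fun s => ?_
      have hm : Measurable fun R : Fin k → ℕ → Bool => R c (s : ℕ) :=
        (measurable_pi_apply _).comp (measurable_pi_apply c)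
      exact hm (measurableSet_singleton (y c s))
    have hdisj : (T : Set (Fin k → Fin t → Bool)).PairwiseDisjoint C := by
      intro y _ y' _ hyy'
      rw [Function.onFun, Set.disjoint_left]
      intro R hR hR'
      apply hyy'
      funext c s
      rw [← hR c s, ← hR' c s]
    rw [hset, measure_biUnion_finset hdisj (fun y _ => hmeas y)]
    rw [Finset.sum_congr rfl (fun y _ => hμ t y), Finset.sum_const, nsmul_eq_mul]
    rw [hT, bb_count_lemma k t c₀]
    exact bb_arith_lemma k t hk
  have hlb : ∀ t : ℕ, 1 ≤ t →
      μ {R | ∃ i : Fin n, ∀ l : Fin n, l ≠ i →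
          bbK (fun i' => R (α i')) l t ≠ bbK (fun i' => R (α i')) i t}
        ≥ 1 - ((k - 1 : ℕ) : ℝ≥0∞) * (2 : ℝ≥0∞)⁻¹ ^ t := by
    intro t ht
    have hsub : {R : Fin k → ℕ → Bool | ∀ l : Fin n, l ≠ i₀ →
        bbK (fun i' => R (α i')) l t ≠ bbK (fun i' => R (α i')) i₀ t}
        ⊆ {R | ∃ i : Fin n, ∀ l : Fin n, l ≠ i →
        bbK (fun i' => R (α i')) l t ≠ bbK (fun i' => R (α i')) i t} :=
      fun R hR => ⟨i₀, hR⟩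
    calc (1:ℝ≥0∞) - ((k - 1 : ℕ) : ℝ≥0∞) * (2 : ℝ≥0∞)⁻¹ ^ t
        ≤ (1 - (2 : ℝ≥0∞)⁻¹ ^ t) ^ (k - 1) := bb_bernoulli_lemma _ (k-1)
      _ = μ {R | ∀ l : Fin n, l ≠ i₀ →
          bbK (fun i' => R (α i')) l t ≠ bbK (fun i' => R (α i')) i₀ t} := (key t).symm
      _ ≤ μ {R | ∃ i : Fin n, ∀ l : Fin n, l ≠ i →
          bbK (fun i' => R (α i')) l t ≠ bbK (fun i' => R (α i')) i t} := measure_mono hsub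
  refine ⟨fun t _ => key t, hlb, ?_⟩
  refine tendsto_of_tendsto_of_tendsto_of_le_of_le' (bb_tendsto_lower (k-1))
    tendsto_const_nhds ?_ ?_
  · exact eventually_atTop.mpr ⟨1, fun t ht => hlb t ht⟩
  · exact Eventually.of_forall (fun t => prob_le_one)
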